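/- Let δ = e₁ ∧ e₂ ∧ e₃ ∧ e₄ be the standard generator of ⋀⁴ℂ⁴ and let β_Pf be the symmetric bilinear form on ⋀²ℂ⁴ determined by ω ∧ η = β_Pf(ω, η) • δ. Suppose the linear map A : ℂ² → ⋀²ℂ⁴ is not ample with respect to β_Pf and w ∈ ℂ⁴ is nonzero. Then there exists a linear map B : ℂ² → ℂ⁴ such that the linear map x ↦ A(x) + w ∧ B(x) is ample with respect to β_Pf. -/

import Mathlib

open ExteriorAlgebra

/-- A linear map `A : E → W` is ample with respect to a bilinear form `β` on `W` if the
restriction of `β` to the range of `A` is either identically zero or nondegenerate. -/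
def IsAmple {E W : Type*} [AddCommGroup E] [Module ℂ E] [AddCommGroup W] [Module ℂ W]
    (β : W →ₗ[ℂ] W →ₗ[ℂ] ℂ) (A : E →ₗ[ℂ] W) : Prop :=
  (∀ w ∈ LinearMap.range A, ∀ w' ∈ LinearMap.range A, β w w' = 0) ∨
  (∀ w ∈ LinearMap.range A, w ≠ 0 → ∃ w' ∈ LinearMap.range A, β w w' ≠ 0)

/-- The standard generator `δ = e₁ ∧ e₂ ∧ e₃ ∧ e₄` of `⋀⁴ℂ⁴`. -/
noncomputable def delta4 : ExteriorAlgebra ℂ (Fin 4 → ℂ) :=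
  ι ℂ (Pi.single 0 1) * ι ℂ (Pi.single 1 1) * ι ℂ (Pi.single 2 1) * ι ℂ (Pi.single 3 1)

namespace Prop6Aux
abbrev V4 := Fin 4 → ℂ
abbrev Ext := ExteriorAlgebra ℂ V4

lemma swap (a b : V4) : ι ℂ a * ι ℂ b = -(ι ℂ b * ι ℂ a) :=
  eq_neg_of_add_eq_zero_left (ι_add_mul_swap a b)

lemma pow2eq : (⋀[ℂ]^2 V4 : Submodule ℂ Ext) =
    LinearMap.range (ι ℂ : V4 →ₗ[ℂ] Ext) * LinearMap.range (ι ℂ : V4 →ₗ[ℂ] Ext) :=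
  pow_two _

lemma mem2 (a b : V4) : ι ℂ a * ι ℂ b ∈ ⋀[ℂ]^2 V4 := by
  rw [pow2eq]
  exact Submodule.mul_mem_mul (LinearMap.mem_range_self _ a) (LinearMap.mem_range_self _ b)

lemma ind2 {P : Ext → Prop} (hbase : ∀ a b : V4, P (ι ℂ a * ι ℂ b))
    (hadd : ∀ x y, P x → P y → P (x + y)) : ∀ x ∈ ⋀[ℂ]^2 V4, P x := by
  intro x hx
  rw [pow2eq] at hx
  refine Submodule.mul_induction_on hx ?_ hadd
  rintro m ⟨a, rfl⟩ n ⟨b, rfl⟩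
  exact hbase a b

lemma comm_ι3 (a b c : V4) : (ι ℂ a * ι ℂ b) * ι ℂ c = ι ℂ c * (ι ℂ a * ι ℂ b) := by
  rw [mul_assoc, swap b c, mul_neg, ← mul_assoc, swap a c, neg_mul, neg_neg, mul_assoc]

lemma comm1 : ∀ x ∈ ⋀[ℂ]^2 V4, ∀ c : V4, x * ι ℂ c = ι ℂ c * x := by
  refine ind2 (fun a b c => comm_ι3 a b c) ?_
  intro x y hx hy c
  rw [add_mul, mul_add, hx, hy]

lemma comm2 : ∀ x ∈ ⋀[ℂ]^2 V4, ∀ y ∈ ⋀[ℂ]^2 V4, x * y = y * x := by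
  intro x hx
  refine ind2 ?_ ?_
  · intro a b
    rw [← mul_assoc, comm1 x hx a, mul_assoc, comm1 x hx b, ← mul_assoc]
  · intro y z hy hz
    rw [mul_add, add_mul, hy, hz]

lemma iso (u a b : V4) : (ι ℂ u * ι ℂ a) * (ι ℂ u * ι ℂ b) = 0 := by
  have h : (ι ℂ u * ι ℂ a) * (ι ℂ u * ι ℂ b) = ι ℂ u * (ι ℂ a * ι ℂ u) * ι ℂ b := by
    simp only [mul_assoc]
  rw [h, swap a u, mul_neg, ← mul_assoc, ι_sq_zero, zero_mul, neg_zero, zero_mul]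

noncomputable def detF : ∀ i : ℕ, V4 [⋀^Fin i]→ₗ[ℂ] ℂ
  | 4 => Matrix.detRowAlternating
  | _ => 0

lemma lift_delta4 : liftAlternating (R := ℂ) (M := V4) detF delta4 = 1 := by
  rw [delta4, mul_assoc, mul_assoc, liftAlternating_ι_mul, liftAlternating_ι_mul,
    liftAlternating_ι_mul, liftAlternating_ι]
  simp only [detF]
  have hm : Matrix.of ![(Pi.single 0 1 : V4), Pi.single 1 1, Pi.single 2 1, Pi.single 3 1] =
      (1 : Matrix (Fin 4) (Fin 4) ℂ) := by
    ext i j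
    fin_cases i <;> fin_cases j <;>
      simp [Pi.single_apply, Matrix.one_apply, Matrix.vecHead, Matrix.vecTail]
  simp only [AlternatingMap.curryLeft_apply_apply]
  calc Matrix.detRowAlternating ![(Pi.single 0 1 : V4), Pi.single 1 1, Pi.single 2 1, Pi.single 3 1]
      = Matrix.det (1 : Matrix (Fin 4) (Fin 4) ℂ) := congrArg Matrix.det hm
    _ = 1 := Matrix.det_one

lemma delta4_ne : delta4 ≠ 0 := by
  intro h
  have := lift_delta4
  rw [h, map_zero] at this
  exact one_ne_zero this.symm

lemma smul_delta4_inj {s t : ℂ} (h : s • delta4 = t • delta4) : s = t := by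
  have h2 : (s - t) • delta4 = 0 := by rw [sub_smul, h, sub_self]
  rcases smul_eq_zero.mp h2 with h3 | h3
  · exact sub_eq_zero.mp h3
  · exact absurd h3 delta4_ne

noncomputable def ctr (φ : Module.Dual ℂ V4) : Ext →ₗ[ℂ] Ext :=
  CliffordAlgebra.contractLeft (Q := (0 : QuadraticForm ℂ V4)) φ

lemma ctr_ι (φ : Module.Dual ℂ V4) (m : V4) : ctr φ (ι ℂ m) = algebraMap ℂ Ext (φ m) :=
  CliffordAlgebra.contractLeft_ι _ _ _

lemma ctr_ι_mul (φ : Module.Dual ℂ V4) (m : V4) (x : Ext) :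
    ctr φ (ι ℂ m * x) = φ m • x - ι ℂ m * ctr φ x :=
  CliffordAlgebra.contractLeft_ι_mul _ _ _

lemma ctr_ctr (φ : Module.Dual ℂ V4) (x : Ext) : ctr φ (ctr φ x) = 0 :=
  CliffordAlgebra.contractLeft_contractLeft _ _

lemma mul_algebraMap' (x : Ext) (c : ℂ) : x * algebraMap ℂ Ext c = c • x := by
  rw [← Algebra.commutes, ← Algebra.smul_def]

lemma ctr_ιι (φ : Module.Dual ℂ V4) (a b : V4) :
    ctr φ (ι ℂ a * ι ℂ b) = φ a • ι ℂ b - φ b • ι ℂ a := by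
  rw [ctr_ι_mul, ctr_ι, mul_algebraMap']

lemma ctr_mem1 (φ : Module.Dual ℂ V4) :
    ∀ x ∈ ⋀[ℂ]^2 V4, ∃ u : V4, ctr φ x = ι ℂ u := by
  refine ind2 ?_ ?_
  · intro a b
    exact ⟨φ a • b - φ b • a, by rw [ctr_ιι, map_sub, map_smul, map_smul]⟩
  · rintro x y ⟨u, hu⟩ ⟨v, hv⟩
    exact ⟨u + v, by rw [map_add, hu, hv, map_add]⟩

/-- contraction is a derivation on products with an even (degree-2) left factor -/
lemma ctr_der2 (φ : Module.Dual ℂ V4) :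
    ∀ x ∈ ⋀[ℂ]^2 V4, ∀ y : Ext, ctr φ (x * y) = ctr φ x * y + x * ctr φ y := by
  refine ind2 ?_ ?_
  · intro a b y
    rw [mul_assoc, ctr_ι_mul, ctr_ι_mul, ctr_ιι]
    simp only [smul_sub, mul_sub, sub_mul, smul_mul_assoc, mul_smul_comm, mul_assoc]
    abel
  · intro x y hx hy z
    simp only [map_add, add_mul, hx, hy]
    abel

/-- The key lemma: if `ω ∧ w ∧ b = 0` for every `b`, then `ω ∧ ω = 0`. -/
lemma keyL (w : V4) (hw : w ≠ 0) (ω : Ext) (hω : ω ∈ ⋀[ℂ]^2 V4)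
    (H : ∀ b : V4, ω * (ι ℂ w * ι ℂ b) = 0) : ω * ω = 0 := by
  -- a dual element with φ w = 1
  obtain ⟨i, hi⟩ : ∃ i, w i ≠ 0 := by
    by_contra h
    push_neg at h
    exact hw (funext h)
  set φ : Module.Dual ℂ V4 := (w i)⁻¹ • LinearMap.proj i with hφdef
  have hφw : φ w = 1 := by
    simp [hφdef, inv_mul_cancel₀ hi]
  -- the identity x = ctr φ (ι w * x) + ι w * ctr φ x
  have hid : ∀ x : Ext, ctr φ (ι ℂ w * x) = x - ι ℂ w * ctr φ x := by
    intro x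
    rw [ctr_ι_mul, hφw, one_smul]
  obtain ⟨u, hu⟩ := ctr_mem1 φ ω hω
  set ω₁ : Ext := ω - ι ℂ w * ι ℂ u with hω₁def
  have hω₁mem : ω₁ ∈ ⋀[ℂ]^2 V4 := Submodule.sub_mem _ hω (mem2 w u)
  have hω₁eq : ω₁ = ctr φ (ι ℂ w * ω) := by rw [hid, hu]
  have hctrω₁ : ctr φ ω₁ = 0 := by rw [hω₁eq, ctr_ctr]
  have Hω₁ : ∀ b : V4, ω₁ * (ι ℂ w * ι ℂ b) = 0 := by
    intro b
    rw [hω₁def, sub_mul, H b, iso, sub_zero]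
  -- ω₁ * ι b = φ b • (ι w * ω₁)
  have step : ∀ b : V4, ω₁ * ι ℂ b = φ b • (ι ℂ w * ω₁) := by
    intro b
    have h0 : ι ℂ w * (ω₁ * ι ℂ b) = 0 := by
      rw [← mul_assoc, ← comm1 ω₁ hω₁mem w, mul_assoc, Hω₁ b]
    have h1 := hid (ω₁ * ι ℂ b)
    rw [h0, map_zero] at h1
    have h2 : ctr φ (ω₁ * ι ℂ b) = φ b • ω₁ := by
      rw [ctr_der2 φ ω₁ hω₁mem, hctrω₁, zero_mul, zero_add, ctr_ι, mul_algebraMap']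
    rw [h2, mul_smul_comm] at h1
    exact sub_eq_zero.mp h1.symm
  have step2 : ∀ a b : V4, ω₁ * (ι ℂ a * ι ℂ b) = 0 := by
    intro a b
    rw [← mul_assoc, step a, smul_mul_assoc, mul_assoc, step b, mul_smul_comm, smul_smul,
      ← mul_assoc, ι_sq_zero, zero_mul, smul_zero]
  have hω₁sq : ω₁ * ω₁ = 0 :=
    ind2 (P := fun y => ω₁ * y = 0) step2
      (fun x y hx hy => by rw [mul_add, hx, hy, add_zero]) ω₁ hω₁mem
  have hcross : ω₁ * (ι ℂ w * ι ℂ u) = 0 := step2 w u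
  have hcross2 : (ι ℂ w * ι ℂ u) * ω₁ = 0 := by
    rw [comm2 _ (mem2 w u) _ hω₁mem, hcross]
  have hexp : ω = ω₁ + ι ℂ w * ι ℂ u := by rw [hω₁def, sub_add_cancel]
  rw [hexp, add_mul, mul_add, mul_add, hω₁sq, hcross, hcross2, iso]
  simp


noncomputable def psi (x0 z : Fin 2 → ℂ) : (Fin 2 → ℂ) →ₗ[ℂ] ℂ :=
  (x0 0 * z 1 - x0 1 * z 0)⁻¹ • ((z 1) • LinearMap.proj 0 - (z 0) • LinearMap.proj 1)

lemma psi_apply (x0 z x : Fin 2 → ℂ) :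
    psi x0 z x = (x0 0 * z 1 - x0 1 * z 0)⁻¹ * (z 1 * x 0 - z 0 * x 1) := by
  simp [psi, mul_sub]

lemma psi_x0 (x0 z : Fin 2 → ℂ) (hd : x0 0 * z 1 - x0 1 * z 0 ≠ 0) : psi x0 z x0 = 1 := by
  have h1 : z 1 * x0 0 - z 0 * x0 1 = x0 0 * z 1 - x0 1 * z 0 := by ring
  rw [psi_apply, h1, inv_mul_cancel₀ hd]

lemma psi_z (x0 z : Fin 2 → ℂ) : psi x0 z z = 0 := by
  have h1 : z 1 * z 0 - z 0 * z 1 = 0 := by ring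
  rw [psi_apply, h1, mul_zero]

lemma psi_decomp (x0 z x : Fin 2 → ℂ) (hd : x0 0 * z 1 - x0 1 * z 0 ≠ 0) :
    x = psi x0 z x • x0
      + ((x0 0 * z 1 - x0 1 * z 0)⁻¹ * (x0 0 * x 1 - x0 1 * x 0)) • z := by
  have key : ∀ j : Fin 2,
      (x0 0 * z 1 - x0 1 * z 0)⁻¹ * (z 1 * x 0 - z 0 * x 1) * x0 j
      + (x0 0 * z 1 - x0 1 * z 0)⁻¹ * (x0 0 * x 1 - x0 1 * x 0) * z j = x j := by
    have e : ∀ j : Fin 2, (z 1 * x 0 - z 0 * x 1) * x0 j + (x0 0 * x 1 - x0 1 * x 0) * z j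
        = (x0 0 * z 1 - x0 1 * z 0) * x j := by
      rw [Fin.forall_fin_two]
      constructor <;> ring
    intro j
    calc (x0 0 * z 1 - x0 1 * z 0)⁻¹ * (z 1 * x 0 - z 0 * x 1) * x0 j
        + (x0 0 * z 1 - x0 1 * z 0)⁻¹ * (x0 0 * x 1 - x0 1 * x 0) * z j
        = (x0 0 * z 1 - x0 1 * z 0)⁻¹
          * ((z 1 * x 0 - z 0 * x 1) * x0 j + (x0 0 * x 1 - x0 1 * x 0) * z j) := by ring
      _ = (x0 0 * z 1 - x0 1 * z 0)⁻¹ * ((x0 0 * z 1 - x0 1 * z 0) * x j) := by rw [e j]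
      _ = x j := by rw [← mul_assoc, inv_mul_cancel₀ hd, one_mul]
  funext j
  simp only [Pi.add_apply, Pi.smul_apply, smul_eq_mul, psi_apply]
  exact (key j).symm

end Prop6Aux

set_option maxHeartbeats 800000 in
/-- Proposition 6(C): let `β_Pf` be the bilinear form on `⋀²ℂ⁴` determined by
`ω ∧ η = β_Pf(ω, η) • δ`. If `A : ℂ² → ⋀²ℂ⁴` is not ample with respect to `β_Pf` and
`w ∈ ℂ⁴` is nonzero, then `x ↦ A x + w ∧ B x` is ample for some `B : ℂ² → ℂ⁴`. -/
theorem not_ample_perturb_wedge_left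
    (βPf : ExteriorAlgebra ℂ (Fin 4 → ℂ) →ₗ[ℂ] ExteriorAlgebra ℂ (Fin 4 → ℂ) →ₗ[ℂ] ℂ)
    (hβPf : ∀ ω η : ExteriorAlgebra ℂ (Fin 4 → ℂ),
      ω ∈ ⋀[ℂ]^2 (Fin 4 → ℂ) → η ∈ ⋀[ℂ]^2 (Fin 4 → ℂ) → ω * η = βPf ω η • delta4)
    (A : (Fin 2 → ℂ) →ₗ[ℂ] ExteriorAlgebra ℂ (Fin 4 → ℂ))
    (hA2 : ∀ x, A x ∈ ⋀[ℂ]^2 (Fin 4 → ℂ))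
    (hA : ¬ IsAmple βPf A)
    (w : Fin 4 → ℂ) (hw : w ≠ 0) :
    ∃ B : (Fin 2 → ℂ) →ₗ[ℂ] (Fin 4 → ℂ),
      IsAmple βPf (A + (LinearMap.mulLeft ℂ (ι ℂ w)) ∘ₗ ((ι ℂ) ∘ₗ B)) := by
  classical
  have βextract : ∀ {x y : ExteriorAlgebra ℂ (Fin 4 → ℂ)}, x ∈ ⋀[ℂ]^2 (Fin 4 → ℂ) →
      y ∈ ⋀[ℂ]^2 (Fin 4 → ℂ) → ∀ {c : ℂ}, x * y = c • delta4 → βPf x y = c := by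
    intro x y hx hy c h
    exact Prop6Aux.smul_delta4_inj (by rw [← hβPf x y hx hy, h])
  have βsym : ∀ x ∈ ⋀[ℂ]^2 (Fin 4 → ℂ), ∀ y ∈ ⋀[ℂ]^2 (Fin 4 → ℂ), βPf x y = βPf y x := by
    intro x hx y hy
    exact βextract hx hy (by rw [Prop6Aux.comm2 x hx y hy, hβPf y x hy hx])
  rw [IsAmple, not_or] at hA
  obtain ⟨hP, hQ⟩ := hA
  push_neg at hP hQ
  obtain ⟨a0, ⟨xa, rfl⟩, b0', ⟨xb, rfl⟩, hab⟩ := hP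
  obtain ⟨r0, ⟨x0, rfl⟩, hr0ne, hrad⟩ := hQ
  -- an anisotropic vector in the range
  obtain ⟨z, hs⟩ : ∃ z : Fin 2 → ℂ, βPf (A z) (A z) ≠ 0 := by
    by_cases h1 : βPf (A xa) (A xa) ≠ 0
    · exact ⟨xa, h1⟩
    by_cases h2 : βPf (A xb) (A xb) ≠ 0
    · exact ⟨xb, h2⟩
    push_neg at h1 h2
    refine ⟨xa + xb, fun h => hab ?_⟩
    rw [map_add] at h
    simp only [map_add, LinearMap.add_apply] at h
    rw [h1, h2, βsym _ (hA2 xb) _ (hA2 xa)] at h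
    have h3 : βPf (A xa) (A xb) + βPf (A xa) (A xb) = 0 := by linear_combination h
    exact add_self_eq_zero.mp h3
  have hrr : βPf (A x0) (A x0) = 0 := hrad _ ⟨x0, rfl⟩
  have hrv : βPf (A x0) (A z) = 0 := hrad _ ⟨z, rfl⟩
  have hvr : βPf (A z) (A x0) = 0 := by
    rw [← βsym _ (hA2 x0) _ (hA2 z)]; exact hrv
  -- x0 and z are linearly independent
  have hd : x0 0 * z 1 - x0 1 * z 0 ≠ 0 := by
    intro hd0
    have h01 : x0 1 = 0 := by
      have hv : (z 1) • x0 = (x0 1) • z := by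
        funext j
        revert j
        rw [Fin.forall_fin_two]
        constructor <;> simp only [Pi.smul_apply, smul_eq_mul] <;>
          first | ring1 | linear_combination hd0 | linear_combination -hd0
      have h2 := congrArg (fun y => βPf y (A z)) (congrArg A hv)
      simp only [map_smul, LinearMap.smul_apply, smul_eq_mul] at h2
      rw [hrv, mul_zero] at h2
      exact (mul_eq_zero.mp h2.symm).resolve_right hs
    have h00 : x0 0 = 0 := by
      have hv : (z 0) • x0 = (x0 0) • z := by
        funext j
        revert j
        rw [Fin.forall_fin_two]
        constructor <;> simp only [Pi.smul_apply, smul_eq_mul] <;>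
          first | ring1 | linear_combination hd0 | linear_combination -hd0
      have h2 := congrArg (fun y => βPf y (A z)) (congrArg A hv)
      simp only [map_smul, LinearMap.smul_apply, smul_eq_mul] at h2
      rw [hrv, mul_zero] at h2
      exact (mul_eq_zero.mp h2.symm).resolve_right hs
    apply hr0ne
    have hx00 : x0 = 0 := by
      funext j
      revert j
      rw [Fin.forall_fin_two]
      exact ⟨h00, h01⟩
    rw [hx00, map_zero]
  -- choose the perturbation direction b0 and scale t
  obtain ⟨b0, t, hD⟩ : ∃ (b0 : Fin 4 → ℂ) (t : ℂ),
      2 * t * (βPf (A x0) (ι ℂ w * ι ℂ b0)) * (βPf (A z) (A z))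
        - t ^ 2 * (βPf (A z) (ι ℂ w * ι ℂ b0)) ^ 2 ≠ 0 := by
    by_cases hf : ∀ b : Fin 4 → ℂ, βPf (A x0) (ι ℂ w * ι ℂ b) = 0
    · have hv2sq : A z * A z ≠ 0 := by
        rw [hβPf _ _ (hA2 z) (hA2 z)]
        exact smul_ne_zero hs Prop6Aux.delta4_ne
      obtain ⟨b1, hb1⟩ : ∃ b, A z * (ι ℂ w * ι ℂ b) ≠ 0 := by
        by_contra hc
        push_neg at hc
        exact hv2sq (Prop6Aux.keyL w hw _ (hA2 z) hc)
      have hg : βPf (A z) (ι ℂ w * ι ℂ b1) ≠ 0 := by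
        intro h0
        apply hb1
        rw [hβPf _ _ (hA2 z) (Prop6Aux.mem2 w b1), h0, zero_smul]
      refine ⟨b1, 1, ?_⟩
      rw [hf b1]
      intro hcon
      apply pow_ne_zero 2 hg
      linear_combination -hcon
    · push_neg at hf
      obtain ⟨b1, hfne⟩ := hf
      by_cases hg : βPf (A z) (ι ℂ w * ι ℂ b1) = 0
      · refine ⟨b1, 1, ?_⟩
        rw [hg]
        intro hcon
        apply mul_ne_zero (mul_ne_zero (two_ne_zero (α := ℂ)) hfne) hs
        linear_combination hcon
      · refine ⟨b1, (βPf (A x0) (ι ℂ w * ι ℂ b1)) * (βPf (A z) (A z))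
            / (βPf (A z) (ι ℂ w * ι ℂ b1)) ^ 2, ?_⟩
        have hcalc : 2 * ((βPf (A x0) (ι ℂ w * ι ℂ b1)) * (βPf (A z) (A z))
              / (βPf (A z) (ι ℂ w * ι ℂ b1)) ^ 2)
              * (βPf (A x0) (ι ℂ w * ι ℂ b1)) * (βPf (A z) (A z))
            - ((βPf (A x0) (ι ℂ w * ι ℂ b1)) * (βPf (A z) (A z))
              / (βPf (A z) (ι ℂ w * ι ℂ b1)) ^ 2) ^ 2
              * (βPf (A z) (ι ℂ w * ι ℂ b1)) ^ 2
            = (βPf (A x0) (ι ℂ w * ι ℂ b1)) ^ 2 * (βPf (A z) (A z)) ^ 2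
              / (βPf (A z) (ι ℂ w * ι ℂ b1)) ^ 2 := by
          field_simp
          ring
        rw [hcalc]
        exact div_ne_zero (mul_ne_zero (pow_ne_zero 2 hfne) (pow_ne_zero 2 hs))
          (pow_ne_zero 2 hg)
  have hWmem : ι ℂ w * ι ℂ b0 ∈ ⋀[ℂ]^2 (Fin 4 → ℂ) := Prop6Aux.mem2 w b0
  refine ⟨LinearMap.smulRight (Prop6Aux.psi x0 z) (t • b0), ?_⟩
  have hF : ∀ x, (A + (LinearMap.mulLeft ℂ (ι ℂ w)) ∘ₗ
      ((ι ℂ) ∘ₗ LinearMap.smulRight (Prop6Aux.psi x0 z) (t • b0))) x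
      = A x + Prop6Aux.psi x0 z x • t • (ι ℂ w * ι ℂ b0) := by
    intro x
    simp only [LinearMap.add_apply, LinearMap.comp_apply, LinearMap.smulRight_apply,
      LinearMap.mulLeft_apply, map_smul]
  have hFx0 : (A + (LinearMap.mulLeft ℂ (ι ℂ w)) ∘ₗ
      ((ι ℂ) ∘ₗ LinearMap.smulRight (Prop6Aux.psi x0 z) (t • b0))) x0
      = A x0 + t • (ι ℂ w * ι ℂ b0) := by
    rw [hF, Prop6Aux.psi_x0 x0 z hd, one_smul]
  have hFz : (A + (LinearMap.mulLeft ℂ (ι ℂ w)) ∘ₗ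
      ((ι ℂ) ∘ₗ LinearMap.smulRight (Prop6Aux.psi x0 z) (t • b0))) z = A z := by
    rw [hF, Prop6Aux.psi_z, zero_smul, add_zero]
  have hpmem : A x0 + t • (ι ℂ w * ι ℂ b0) ∈ ⋀[ℂ]^2 (Fin 4 → ℂ) :=
    Submodule.add_mem _ (hA2 x0) (Submodule.smul_mem _ _ hWmem)
  -- products
  have hr0r0 : A x0 * A x0 = 0 := by rw [hβPf _ _ (hA2 x0) (hA2 x0), hrr, zero_smul]
  have hr0W : A x0 * (ι ℂ w * ι ℂ b0) = βPf (A x0) (ι ℂ w * ι ℂ b0) • delta4 :=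
    hβPf _ _ (hA2 x0) hWmem
  have hWr0 : (ι ℂ w * ι ℂ b0) * A x0 = βPf (A x0) (ι ℂ w * ι ℂ b0) • delta4 := by
    rw [Prop6Aux.comm2 _ hWmem _ (hA2 x0)]; exact hr0W
  have hvW : A z * (ι ℂ w * ι ℂ b0) = βPf (A z) (ι ℂ w * ι ℂ b0) • delta4 :=
    hβPf _ _ (hA2 z) hWmem
  have hWv : (ι ℂ w * ι ℂ b0) * A z = βPf (A z) (ι ℂ w * ι ℂ b0) • delta4 := by
    rw [Prop6Aux.comm2 _ hWmem _ (hA2 z)]; exact hvW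
  have hWW : (ι ℂ w * ι ℂ b0) * (ι ℂ w * ι ℂ b0) = 0 := Prop6Aux.iso w b0 b0
  have hr0v : A x0 * A z = 0 := by rw [hβPf _ _ (hA2 x0) (hA2 z), hrv, zero_smul]
  have hvr0 : A z * A x0 = 0 := by rw [hβPf _ _ (hA2 z) (hA2 x0), hvr, zero_smul]
  -- Gram matrix entries
  have hβpp : βPf (A x0 + t • (ι ℂ w * ι ℂ b0)) (A x0 + t • (ι ℂ w * ι ℂ b0))
      = 2 * t * βPf (A x0) (ι ℂ w * ι ℂ b0) := by
    apply βextract hpmem hpmem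
    have hexp : (A x0 + t • (ι ℂ w * ι ℂ b0)) * (A x0 + t • (ι ℂ w * ι ℂ b0))
        = A x0 * A x0 + t • (A x0 * (ι ℂ w * ι ℂ b0)) + t • ((ι ℂ w * ι ℂ b0) * A x0)
          + (t*t) • ((ι ℂ w * ι ℂ b0) * (ι ℂ w * ι ℂ b0)) := by
      simp only [add_mul, mul_add, smul_mul_assoc, mul_smul_comm, smul_smul]
      module
    rw [hexp, hr0r0, hr0W, hWr0, hWW]
    module
  have hβpq : βPf (A x0 + t • (ι ℂ w * ι ℂ b0)) (A z)
      = t * βPf (A z) (ι ℂ w * ι ℂ b0) := by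
    apply βextract hpmem (hA2 z)
    have hexp : (A x0 + t • (ι ℂ w * ι ℂ b0)) * A z
        = A x0 * A z + t • ((ι ℂ w * ι ℂ b0) * A z) := by
      simp only [add_mul, smul_mul_assoc]
    rw [hexp, hr0v, hWv]
    module
  have hβqp : βPf (A z) (A x0 + t • (ι ℂ w * ι ℂ b0))
      = t * βPf (A z) (ι ℂ w * ι ℂ b0) := by
    apply βextract (hA2 z) hpmem
    have hexp : A z * (A x0 + t • (ι ℂ w * ι ℂ b0))
        = A z * A x0 + t • (A z * (ι ℂ w * ι ℂ b0)) := by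
      simp only [mul_add, mul_smul_comm]
    rw [hexp, hvr0, hvW]
    module
  -- conclude ampleness
  right
  rintro m ⟨x, rfl⟩ hmne
  by_contra hcon
  push_neg at hcon
  have hp' := hcon (A x0 + t • (ι ℂ w * ι ℂ b0)) ⟨x0, hFx0⟩
  have hq' := hcon (A z) ⟨z, hFz⟩
  have hxdec : (A + (LinearMap.mulLeft ℂ (ι ℂ w)) ∘ₗ
      ((ι ℂ) ∘ₗ LinearMap.smulRight (Prop6Aux.psi x0 z) (t • b0))) x
      = Prop6Aux.psi x0 z x • (A x0 + t • (ι ℂ w * ι ℂ b0))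
        + ((x0 0 * z 1 - x0 1 * z 0)⁻¹ * (x0 0 * x 1 - x0 1 * x 0)) • A z := by
    conv_lhs => rw [Prop6Aux.psi_decomp x0 z x hd]
    rw [map_add, map_smul, map_smul, hFx0, hFz]
  rw [hxdec] at hp' hq' hmne
  rw [map_add βPf, LinearMap.add_apply, map_smul βPf, map_smul βPf, LinearMap.smul_apply,
    LinearMap.smul_apply, smul_eq_mul, smul_eq_mul, hβpp, hβqp] at hp'
  rw [map_add βPf, LinearMap.add_apply, map_smul βPf, map_smul βPf, LinearMap.smul_apply,
    LinearMap.smul_apply, smul_eq_mul, smul_eq_mul, hβpq] at hq'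
  have ha0 : Prop6Aux.psi x0 z x = 0 := by
    have hkey : Prop6Aux.psi x0 z x * (2 * t * (βPf (A x0) (ι ℂ w * ι ℂ b0))
        * (βPf (A z) (A z)) - t ^ 2 * (βPf (A z) (ι ℂ w * ι ℂ b0)) ^ 2) = 0 := by
      linear_combination (βPf (A z) (A z)) * hp' - t * (βPf (A z) (ι ℂ w * ι ℂ b0)) * hq'
    exact (mul_eq_zero.mp hkey).resolve_right hD
  have hc0 : (x0 0 * z 1 - x0 1 * z 0)⁻¹ * (x0 0 * x 1 - x0 1 * x 0) = 0 := by
    rw [ha0, zero_mul, zero_add] at hq'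
    exact (mul_eq_zero.mp hq').resolve_right hs
  rw [ha0, hc0, zero_smul, zero_smul, add_zero] at hmne
  exact hmne rfl
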